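/- Fix a positive integer n and define the m × m matrices U = (⌊n/(s_a s_b)⌋) and 𝓜 = (M(⌊n/(s_a s_b)⌋)) over the increasing enumeration s₁ < … < s_m of S = { k : 1 ≤ k ≤ n and ⌊n/(k+1)⌋ < ⌊n/k⌋ }, where M is the Mertens function with M(0) = 0. Let T be the m × m 0-1 matrix with T_{a,b} = 1 iff a + b ≤ m + 1 (ones on and above the antidiagonal). Then, over the rationals, 𝓜 = T U⁻¹ T; in particular U is invertible. -/

import Mathlib

open Finset

/- ### Auxiliary lemmas (tested in t1/t2) -/

lemma divisor_sum_moebius (q : ℕ) :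
    ∑ e ∈ q.divisors, (ArithmeticFunction.moebius e : ℤ) = if q = 1 then 1 else 0 := by
  have h := ArithmeticFunction.moebius_mul_coe_zeta
  have h2 := congrArg (fun f => f q) h
  simpa only [ArithmeticFunction.coe_mul_zeta_apply, ArithmeticFunction.one_apply] using h2

lemma mertens_main (M : ℕ → ℤ)
    (hM : ∀ l, M l = ∑ d ∈ Finset.Icc 1 l, ArithmeticFunction.moebius d)
    (K N : ℕ) (hKN : K ≤ N) :
    ∑ d ∈ Finset.Icc 1 N, M (K / d) = if 1 ≤ K then 1 else 0 := by
  have hM0 : M 0 = 0 := by simp [hM]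
  have h1 : ∑ d ∈ Icc 1 N, M (K / d) = ∑ d ∈ Icc 1 K, M (K / d) := by
    rw [Finset.sum_subset (Finset.Icc_subset_Icc_right hKN)]
    intro x hx hx'
    simp only [mem_Icc] at hx hx'
    have hK : K < x := by omega
    rw [Nat.div_eq_of_lt hK, hM0]
  rw [h1]
  rcases Nat.eq_zero_or_pos K with rfl | hK
  · simp
  rw [if_pos (by omega : 1 ≤ K)]
  have h2 : ∀ d ∈ Icc 1 K, M (K / d) = ∑ e ∈ Icc 1 K, if d * e ≤ K then (ArithmeticFunction.moebius e : ℤ) else 0 := by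
    intro d hd
    simp only [mem_Icc] at hd
    rw [hM, ← Finset.sum_filter]
    congr 1
    ext e
    simp only [mem_Icc, mem_filter]
    constructor
    · rintro ⟨h1', h2'⟩
      have hde : e * d ≤ K := (Nat.le_div_iff_mul_le (by omega)).mp h2'
      have heK : e ≤ K := le_trans (Nat.le_mul_of_pos_right e (by omega)) hde
      exact ⟨⟨h1', heK⟩, by rw [mul_comm]; exact hde⟩
    · rintro ⟨⟨h1', _⟩, h3'⟩
      exact ⟨h1', (Nat.le_div_iff_mul_le (by omega)).mpr (by rw [mul_comm]; exact h3')⟩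
  rw [Finset.sum_congr rfl h2, Finset.sum_comm]
  have h3 : ∀ e ∈ Icc 1 K, (∑ d ∈ Icc 1 K, if d * e ≤ K then (ArithmeticFunction.moebius e : ℤ) else 0)
      = (K / e : ℕ) * ArithmeticFunction.moebius e := by
    intro e he
    simp only [mem_Icc] at he
    rw [← Finset.sum_filter]
    rw [Finset.sum_const]
    have : (Icc 1 K).filter (fun d => d * e ≤ K) = Icc 1 (K / e) := by
      ext d
      simp only [mem_Icc, mem_filter]
      constructor
      · rintro ⟨⟨h1', _⟩, h3'⟩
        exact ⟨h1', (Nat.le_div_iff_mul_le (by omega)).mpr h3'⟩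
      · rintro ⟨h1', h2'⟩
        have hde : d * e ≤ K := (Nat.le_div_iff_mul_le (by omega)).mp h2'
        have : d ≤ K := le_trans (Nat.le_mul_of_pos_right d (by omega)) hde
        exact ⟨⟨h1', this⟩, hde⟩
    rw [this, Nat.card_Icc]
    simp [mul_comm]
  rw [Finset.sum_congr rfl h3]
  have h4 : ∀ e ∈ Icc 1 K, ((K / e : ℕ) : ℤ) * ArithmeticFunction.moebius e
      = ∑ q ∈ Icc 1 K, if e ∣ q then (ArithmeticFunction.moebius e : ℤ) else 0 := by
    intro e he
    simp only [mem_Icc] at he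
    rw [← Finset.sum_filter, Finset.sum_const]
    have hIcc : Icc 1 K = Ioc 0 K := by
      ext q; simp only [mem_Icc, mem_Ioc]; omega
    rw [hIcc, Nat.Ioc_filter_dvd_card_eq_div]
    simp [mul_comm]
  rw [Finset.sum_congr rfl h4, Finset.sum_comm]
  have h5 : ∀ q ∈ Icc 1 K, (∑ e ∈ Icc 1 K, if e ∣ q then (ArithmeticFunction.moebius e : ℤ) else 0)
      = if q = 1 then 1 else 0 := by
    intro q hq
    simp only [mem_Icc] at hq
    rw [← Finset.sum_filter]
    rw [← divisor_sum_moebius q]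
    congr 1
    ext e
    simp only [mem_filter, mem_Icc, Nat.mem_divisors]
    constructor
    · rintro ⟨⟨h1', _⟩, h3'⟩; exact ⟨h3', by omega⟩
    · rintro ⟨h1', h2'⟩
      have he1 : 1 ≤ e := Nat.pos_of_dvd_of_pos h1' (by omega)
      have he2 : e ≤ q := Nat.le_of_dvd (by omega) h1'
      exact ⟨⟨he1, by omega⟩, h1'⟩
  rw [Finset.sum_congr rfl h5, Finset.sum_ite_eq' (Icc 1 K) 1 (fun _ => (1:ℤ))]
  simp only [mem_Icc]
  rw [if_pos ⟨le_refl 1, hK⟩]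

lemma memS_iff {n : ℕ} {S : Finset ℕ}
    (hS : S = (Finset.Icc 1 n).filter (fun k => n / (k + 1) < n / k)) (k : ℕ) :
    k ∈ S ↔ (1 ≤ k ∧ k ≤ n ∧ n / (k + 1) < n / k) := by
  subst hS
  simp only [mem_filter, mem_Icc]
  tauto

lemma div_memS {n : ℕ} {S : Finset ℕ}
    (hS : S = (Finset.Icc 1 n).filter (fun k => n / (k + 1) < n / k))
    (j : ℕ) (h1 : 1 ≤ j) (h2 : j ≤ n) : n / j ∈ S := by
  rw [memS_iff hS]
  set k := n / j with hk
  have hk1 : 1 ≤ k := (Nat.one_le_div_iff (by omega)).mpr h2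
  refine ⟨hk1, Nat.div_le_self n j, ?_⟩
  have hjk : j ≤ n / k := by
    rw [Nat.le_div_iff_mul_le (by omega)]
    rw [mul_comm]
    exact Nat.div_mul_le_self n j
  have hlt : n / (k + 1) < j := by
    rw [Nat.div_lt_iff_lt_mul (by omega)]
    have : n / j < k + 1 := by omega
    rw [Nat.div_lt_iff_lt_mul (by omega)] at this
    calc n < (k + 1) * j := this
    _ = j * (k + 1) := mul_comm _ _
  omega

lemma div_div_S {n : ℕ} {S : Finset ℕ}
    (hS : S = (Finset.Icc 1 n).filter (fun k => n / (k + 1) < n / k))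
    (k : ℕ) (hk : k ∈ S) : n / (n / k) = k := by
  rw [memS_iff hS] at hk
  obtain ⟨hk1, hkn, hlt⟩ := hk
  set q := n / k with hq
  have hq1 : 1 ≤ q := lt_of_le_of_lt (Nat.zero_le _) hlt
  have h1 : k ≤ n / q := by
    rw [Nat.le_div_iff_mul_le (by omega), mul_comm]
    exact Nat.div_mul_le_self n k
  have h2 : n / q < k + 1 := by
    rw [Nat.div_lt_iff_lt_mul (by omega)]
    rw [Nat.div_lt_iff_lt_mul (by omega)] at hlt
    calc n < q * (k + 1) := hlt
    _ = (k + 1) * q := mul_comm _ _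
  omega

lemma div_flip {n p x d : ℕ} (hp : 1 ≤ p) (hx : 1 ≤ x) (hd : 1 ≤ d) :
    x ≤ n / (p * d) ↔ d ≤ n / (p * x) := by
  rw [Nat.le_div_iff_mul_le (Nat.mul_pos (by omega) (by omega)),
      Nat.le_div_iff_mul_le (Nat.mul_pos (by omega) (by omega))]
  rw [show x * (p * d) = d * (p * x) by ring]

lemma filter_le_div {n p x : ℕ} (hp : 1 ≤ p) (hx : 1 ≤ x) :
    (Finset.Icc 1 n).filter (fun d => x ≤ n / (p * d)) = Finset.Icc 1 (n / (p * x)) := by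
  ext d
  simp only [mem_filter, mem_Icc]
  constructor
  · rintro ⟨⟨h1, _⟩, h3⟩
    exact ⟨h1, (div_flip hp hx h1).mp h3⟩
  · rintro ⟨h1, h2⟩
    have hdn : d ≤ n := le_trans h2 (Nat.div_le_self _ _)
    exact ⟨⟨h1, hdn⟩, (div_flip hp hx h1).mpr h2⟩

theorem M_eq_T_Uinv_T (n : ℕ) (hn : 0 < n)
    (S : Finset ℕ) (hS : S = (Finset.Icc 1 n).filter (fun k => n / (k + 1) < n / k))
    (m : ℕ) (hm : S.card = m)
    (s : Fin m → ℕ) (hs : ∀ a, s a = (S.orderIsoOfFin hm a : ℕ))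
    (M : ℕ → ℤ) (hM : ∀ l, M l = ∑ d ∈ Finset.Icc 1 l, ArithmeticFunction.moebius d)
    (U : Matrix (Fin m) (Fin m) ℚ) (hU : ∀ a b, U a b = (n / (s a * s b) : ℕ))
    (Mmat : Matrix (Fin m) (Fin m) ℚ) (hMmat : ∀ a b, Mmat a b = (M (n / (s a * s b)) : ℚ))
    (T : Matrix (Fin m) (Fin m) ℚ)
    (hT : ∀ a b, T a b = if (a : ℕ) + 1 + ((b : ℕ) + 1) ≤ m + 1 then 1 else 0) :
    IsUnit U ∧ Mmat = T * U⁻¹ * T := by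
  classical
  have hM0 : M 0 = 0 := by simp [hM]
  -- basic facts about s
  have hsmemS : ∀ a, s a ∈ S := fun a => by rw [hs]; exact (S.orderIsoOfFin hm a).2
  have hsmem : ∀ a, 1 ≤ s a ∧ s a ≤ n := fun a => by
    have := (memS_iff hS (s a)).mp (hsmemS a); exact ⟨this.1, this.2.1⟩
  have hse : s = fun a => S.orderEmbOfFin hm a := funext fun a => by
    rw [hs, Finset.coe_orderIsoOfFin_apply]
  have hsmono : StrictMono s := by rw [hse]; exact (S.orderEmbOfFin hm).strictMono
  have hsle : ∀ {a b : Fin m}, s a ≤ s b ↔ a ≤ b := fun {a b} => hsmono.le_iff_le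
  have hsurj : ∀ x ∈ S, ∃ c, s c = x := by
    intro x hx
    have : x ∈ Set.range (S.orderEmbOfFin hm) := by
      rw [Finset.range_orderEmbOfFin]; exact hx
    obtain ⟨c, hc⟩ := this
    exact ⟨c, by rw [hse]; exact hc⟩
  -- the reversal fact
  have hrev : ∀ a, s (Fin.rev a) = n / s a := by
    have hf : ∀ a : Fin m, n / s (Fin.rev a) ∈ S := fun a =>
      div_memS hS _ (hsmem _).1 (hsmem _).2
    have hmono : StrictMono (fun a : Fin m => n / s (Fin.rev a)) := by
      intro a b hab
      have h1 : Fin.rev b < Fin.rev a := by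
        rw [Fin.lt_def] at hab ⊢
        rw [Fin.val_rev, Fin.val_rev]
        have := a.2; have := b.2; omega
      have h2 : s (Fin.rev b) < s (Fin.rev a) := hsmono h1
      have hle : n / s (Fin.rev a) ≤ n / s (Fin.rev b) :=
        Nat.div_le_div_left h2.le (lt_of_lt_of_le Nat.zero_lt_one (hsmem _).1)
      have hne : n / s (Fin.rev a) ≠ n / s (Fin.rev b) := by
        intro h
        have e1 := div_div_S hS _ (hsmemS (Fin.rev a))
        have e2 := div_div_S hS _ (hsmemS (Fin.rev b))
        rw [h] at e1
        rw [e1] at e2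
        omega
      show n / s (Fin.rev a) < n / s (Fin.rev b)
      omega
    have huniq := Finset.orderEmbOfFin_unique hm hf hmono
    have h3 : ∀ a, n / s (Fin.rev a) = s a := by
      intro a
      have h5 := congrFun huniq a
      rw [hs a, Finset.coe_orderIsoOfFin_apply]
      exact h5
    intro a
    have h4 := h3 (Fin.rev a)
    rw [Fin.rev_rev] at h4
    exact h4.symm
  -- define auxiliary matrices
  set L : Matrix (Fin m) (Fin m) ℚ :=
    Matrix.of (fun a b => if b ≤ a then 1 else 0) with hL
  set Li : Matrix (Fin m) (Fin m) ℚ :=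
    Matrix.of (fun a b => (if a = b then (1:ℚ) else 0) - (if (a:ℕ) = (b:ℕ) + 1 then 1 else 0)) with hLi
  set R : Matrix (Fin m) (Fin m) ℚ :=
    Matrix.of (fun a b => if b = Fin.rev a then 1 else 0) with hR
  -- R * X
  have hRmul : ∀ X : Matrix (Fin m) (Fin m) ℚ, ∀ a b, (R * X) a b = X (Fin.rev a) b := by
    intro X a b
    rw [Matrix.mul_apply]
    have : ∀ c, R a c * X c b = if c = Fin.rev a then X c b else 0 := by
      intro c
      rw [hR]
      simp only [Matrix.of_apply]
      split_ifs <;> simp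
    rw [Finset.sum_congr rfl (fun c _ => this c), Finset.sum_ite_eq' Finset.univ (Fin.rev a) (fun c => X c b), if_pos (Finset.mem_univ _)]
  -- X * R
  have hmulR : ∀ X : Matrix (Fin m) (Fin m) ℚ, ∀ a b, (X * R) a b = X a (Fin.rev b) := by
    intro X a b
    rw [Matrix.mul_apply]
    have : ∀ c, X a c * R c b = if c = Fin.rev b then X a c else 0 := by
      intro c
      rw [hR]
      simp only [Matrix.of_apply]
      have : b = Fin.rev c ↔ c = Fin.rev b := by
        constructor <;> intro h <;> rw [h, Fin.rev_rev]
      rw [if_congr this rfl rfl]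
      split_ifs <;> simp
    rw [Finset.sum_congr rfl (fun c _ => this c), Finset.sum_ite_eq' Finset.univ (Fin.rev b) (fun c => X a c), if_pos (Finset.mem_univ _)]
  have hRR : R * R = 1 := by
    ext a b
    rw [hRmul R a b, hR]
    simp only [Matrix.of_apply, Matrix.one_apply]
    have : b = Fin.rev (Fin.rev a) ↔ a = b := by rw [Fin.rev_rev]; exact eq_comm
    rw [if_congr this rfl rfl]
  -- L * Li = 1
  have hLLi : L * Li = 1 := by
    ext a b
    rw [Matrix.mul_apply]
    have hterm : ∀ c, L a c * Li c b =
        (if c = b then (if c ≤ a then (1:ℚ) else 0) else 0)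
        - (if (c:ℕ) = (b:ℕ) + 1 then (if c ≤ a then (1:ℚ) else 0) else 0) := by
      intro c
      rw [hL, hLi]
      simp only [Matrix.of_apply]
      split_ifs <;> ring
    rw [Finset.sum_congr rfl (fun c _ => hterm c), Finset.sum_sub_distrib]
    rw [Finset.sum_ite_eq' Finset.univ b (fun c => if c ≤ a then (1:ℚ) else 0), if_pos (Finset.mem_univ _)]
    by_cases h : (b:ℕ) + 1 < m
    · have hcond : ∀ c : Fin m, ((c:ℕ) = (b:ℕ) + 1) ↔ c = ⟨(b:ℕ)+1, h⟩ := by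
        intro c; rw [Fin.ext_iff]
      rw [Finset.sum_congr rfl (fun c _ => by rw [if_congr (hcond c) rfl rfl]),
        Finset.sum_ite_eq' Finset.univ (⟨(b:ℕ)+1, h⟩ : Fin m) (fun c => if c ≤ a then (1:ℚ) else 0), if_pos (Finset.mem_univ _)]
      simp only [Matrix.one_apply, Fin.le_def, Fin.ext_iff, Fin.val_mk]
      have ha := a.2; have hb := b.2
      split_ifs <;> first | ring1 | (exfalso; omega)
    · have hz : ∀ c : Fin m, ¬((c:ℕ) = (b:ℕ) + 1) := fun c hc => by have := c.2; omega
      rw [Finset.sum_congr rfl (fun c _ => if_neg (hz c)), Finset.sum_const_zero]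
      simp only [Matrix.one_apply, Fin.le_def, Fin.ext_iff]
      have ha := a.2; have hb := b.2
      split_ifs <;> first | ring1 | (exfalso; omega)
  -- Li * L = 1
  have hLiL : Li * L = 1 := by
    ext a b
    rw [Matrix.mul_apply]
    have hterm : ∀ c, Li a c * L c b =
        (if c = a then (if b ≤ c then (1:ℚ) else 0) else 0)
        - (if (a:ℕ) = (c:ℕ) + 1 then (if b ≤ c then (1:ℚ) else 0) else 0) := by
      intro c
      rw [hL, hLi]
      simp only [Matrix.of_apply]
      by_cases h1 : a = c
      · have h1' : c = a := h1.symm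
        subst h1'
        split_ifs <;> first | ring1 | (exfalso; omega)
      · have h1' : ¬(c = a) := fun hh => h1 hh.symm
        rw [if_neg h1, if_neg h1']
        split_ifs <;> ring
    rw [Finset.sum_congr rfl (fun c _ => hterm c), Finset.sum_sub_distrib]
    rw [Finset.sum_ite_eq' Finset.univ a (fun c => if b ≤ c then (1:ℚ) else 0), if_pos (Finset.mem_univ _)]
    by_cases h : 1 ≤ (a:ℕ)
    · have h' : (a:ℕ) - 1 < m := by have := a.2; omega
      have hcond : ∀ c : Fin m, ((a:ℕ) = (c:ℕ) + 1) ↔ c = ⟨(a:ℕ)-1, h'⟩ := by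
        intro c
        rw [Fin.ext_iff]
        simp only [Fin.val_mk]
        omega
      rw [Finset.sum_congr rfl (fun c _ => by rw [if_congr (hcond c) rfl rfl]),
        Finset.sum_ite_eq' Finset.univ (⟨(a:ℕ)-1, h'⟩ : Fin m) (fun c => if b ≤ c then (1:ℚ) else 0), if_pos (Finset.mem_univ _)]
      simp only [Matrix.one_apply, Fin.le_def, Fin.ext_iff, Fin.val_mk]
      have ha := a.2; have hb := b.2
      split_ifs <;> first | ring1 | (exfalso; omega)
    · have hz : ∀ c : Fin m, ¬((a:ℕ) = (c:ℕ) + 1) := fun c hc => by omega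
      rw [Finset.sum_congr rfl (fun c _ => if_neg (hz c)), Finset.sum_const_zero]
      simp only [Matrix.one_apply, Fin.le_def, Fin.ext_iff]
      have ha := a.2; have hb := b.2
      split_ifs <;> first | ring1 | (exfalso; omega)
  -- T = R * L
  have hTRL : T = R * L := by
    ext a b
    rw [hRmul L a b, hT, hL]
    simp only [Matrix.of_apply]
    have ha := a.2; have hb := b.2
    have hif : b ≤ Fin.rev a ↔ (a:ℕ) + 1 + ((b:ℕ) + 1) ≤ m + 1 := by
      rw [Fin.le_def, Fin.val_rev]
      omega
    rw [if_congr hif.symm rfl rfl]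
  -- nxt
  set nxt : Fin m → ℕ := fun c => if h : (c:ℕ) + 1 < m then s ⟨(c:ℕ)+1, h⟩ else n + 1 with hnxtdef
  have hnxt1 : ∀ c, 1 ≤ nxt c := by
    intro c
    rw [hnxtdef]
    by_cases h : (c:ℕ)+1 < m
    · simp only [dif_pos h]; exact (hsmem _).1
    · simp only [dif_neg h]; omega
  have hnxtgt : ∀ c, s c < nxt c := by
    intro c
    rw [hnxtdef]
    by_cases h : (c:ℕ)+1 < m
    · simp only [dif_pos h]
      exact hsmono (by rw [Fin.lt_def]; simp)
    · simp only [dif_neg h]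
      have := (hsmem c).2; omega
  have hnxtle : ∀ c e : Fin m, c < e → nxt c ≤ s e := by
    intro c e hce
    rw [Fin.lt_def] at hce
    have h : (c:ℕ) + 1 < m := by have := e.2; omega
    rw [hnxtdef]
    simp only [dif_pos h]
    exact hsmono.monotone (by rw [Fin.le_def]; simpa)
  -- the counting lemma
  have hcnt : ∀ a c : Fin m,
      ((Icc 1 n).filter (fun d => n / (s a * d) = s c)).card + n / (s a * nxt c)
        = n / (s a * s c) := by
    intro a c
    have hpt : ∀ d ∈ Icc 1 n,
        (n / (s a * d) = s c ↔ (s c ≤ n / (s a * d) ∧ ¬ (nxt c ≤ n / (s a * d)))) := by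
      intro d hd
      simp only [mem_Icc] at hd
      constructor
      · intro hv
        refine ⟨le_of_eq hv.symm, ?_⟩
        rw [hv]
        exact not_le.mpr (hnxtgt c)
      · rintro ⟨h1, h2⟩
        have hv1 : 1 ≤ n / (s a * d) := le_trans (hsmem c).1 h1
        have hsd : s a * d ≤ n := by
          by_contra hc
          rw [Nat.div_eq_of_lt (by omega)] at hv1
          omega
        have hsd1 : 1 ≤ s a * d := Nat.mul_pos (hsmem a).1 (by omega)
        have hvS : n / (s a * d) ∈ S := div_memS hS _ hsd1 hsd
        obtain ⟨e, he⟩ := hsurj _ hvS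
        have hce : c ≤ e := hsle.mp (by rw [he]; exact h1)
        rcases eq_or_lt_of_le hce with heq | hlt
        · rw [← he, ← heq]
        · exact absurd (by rw [← he] at h2; exact (hnxtle c e hlt)) (by rw [← he] at h2; exact h2)
    have hpt2 : ∀ d ∈ Icc 1 n,
        (s c ≤ n / (s a * d) ↔ (n / (s a * d) = s c ∨ nxt c ≤ n / (s a * d))) := by
      intro d hd
      constructor
      · intro h1
        by_cases h2 : nxt c ≤ n / (s a * d)
        · exact Or.inr h2
        · exact Or.inl ((hpt d hd).mpr ⟨h1, h2⟩)
      · rintro (h | h)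
        · exact le_of_eq h.symm
        · exact le_trans (hnxtgt c).le h
    have hsplit : (Icc 1 n).filter (fun d => s c ≤ n / (s a * d))
        = (Icc 1 n).filter (fun d => n / (s a * d) = s c)
          ∪ (Icc 1 n).filter (fun d => nxt c ≤ n / (s a * d)) := by
      rw [← Finset.filter_or]
      exact Finset.filter_congr hpt2
    have hdisj : Disjoint ((Icc 1 n).filter (fun d => n / (s a * d) = s c))
        ((Icc 1 n).filter (fun d => nxt c ≤ n / (s a * d))) := by
      rw [Finset.disjoint_left]
      intro d hd1 hd2
      simp only [mem_filter] at hd1 hd2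
      exact ((hpt d (by simp only [mem_Icc]; exact (mem_Icc.mp hd1.1))).mp hd1.2).2 hd2.2
    have hcard := congrArg Finset.card hsplit
    rw [Finset.card_union_of_disjoint hdisj] at hcard
    rw [filter_le_div (hsmem a).1 (hsmem c).1, filter_le_div (hsmem a).1 (hnxt1 c)] at hcard
    rw [Nat.card_Icc, Nat.card_Icc, Nat.add_sub_cancel, Nat.add_sub_cancel] at hcard
    exact hcard.symm
  -- entries of U * Li
  have hULi : ∀ a c, (U * Li) a c
      = ((n / (s a * s c) : ℕ) : ℚ) - ((n / (s a * nxt c) : ℕ) : ℚ) := by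
    intro a c
    rw [Matrix.mul_apply]
    have hterm : ∀ e, U a e * Li e c
        = (if e = c then U a e else 0) - (if (e:ℕ) = (c:ℕ) + 1 then U a e else 0) := by
      intro e
      rw [hLi]
      simp only [Matrix.of_apply]
      split_ifs <;> ring
    rw [Finset.sum_congr rfl (fun e _ => hterm e), Finset.sum_sub_distrib,
      Finset.sum_ite_eq' Finset.univ c (U a), if_pos (Finset.mem_univ _)]
    congr 1
    · exact hU a c
    · by_cases h : (c:ℕ) + 1 < m
      · have hcond : ∀ e : Fin m, ((e:ℕ) = (c:ℕ) + 1) ↔ e = ⟨(c:ℕ)+1, h⟩ := by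
          intro e; rw [Fin.ext_iff]
        rw [Finset.sum_congr rfl (fun e _ => by rw [if_congr (hcond e) rfl rfl]),
          Finset.sum_ite_eq' Finset.univ (⟨(c:ℕ)+1, h⟩ : Fin m) (U a), if_pos (Finset.mem_univ _), hU]
        have hnx : nxt c = s ⟨(c:ℕ)+1, h⟩ := by rw [hnxtdef]; simp only [dif_pos h]
        rw [hnx]
      · have hz : ∀ e : Fin m, ¬((e:ℕ) = (c:ℕ) + 1) := fun e hc => by have := e.2; omega
        rw [Finset.sum_congr rfl (fun e _ => if_neg (hz e)), Finset.sum_const_zero]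
        have hnx : nxt c = n + 1 := by rw [hnxtdef]; simp only [dif_neg h]
        rw [hnx]
        have hlt : n < s a * (n + 1) := by
          have h1 := (hsmem a).1
          calc n < n + 1 := by omega
          _ ≤ s a * (n+1) := Nat.le_mul_of_pos_left _ (by omega)
        rw [Nat.div_eq_of_lt hlt]
        simp
  -- entries of R * Mmat
  have hRM : ∀ c b, (R * Mmat) c b = (M (s c / s b) : ℚ) := by
    intro c b
    rw [hRmul Mmat c b, hMmat, hrev]
    have hval : n / (n / s c * s b) = s c / s b := by
      rw [← Nat.div_div_eq_div_mul, div_div_S hS _ (hsmemS c)]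
    rw [hval]
  -- the core identity
  have hcore : (U * Li) * (R * Mmat) = T := by
    ext a b
    rw [Matrix.mul_apply]
    have hterm : ∀ c, (U * Li) a c * (R * Mmat) c b
        = (((Icc 1 n).filter (fun d => n / (s a * d) = s c)).card : ℚ) * (M (s c / s b) : ℚ) := by
      intro c
      rw [hULi a c, hRM c b]
      congr 1
      have hc := hcnt a c
      have : ((n / (s a * s c) : ℕ) : ℚ)
          = (((Icc 1 n).filter (fun d => n / (s a * d) = s c)).card : ℚ) + ((n / (s a * nxt c) : ℕ) : ℚ) := by
        rw [← Nat.cast_add, hc]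
      rw [this]
      ring
    rw [Finset.sum_congr rfl (fun c _ => hterm c)]
    have hterm2 : ∀ c : Fin m,
        (((Icc 1 n).filter (fun d => n / (s a * d) = s c)).card : ℚ) * (M (s c / s b) : ℚ)
        = ∑ d ∈ Icc 1 n, if n / (s a * d) = s c then (M (s c / s b) : ℚ) else 0 := by
      intro c
      rw [← Finset.sum_filter, Finset.sum_const, nsmul_eq_mul]
    rw [Finset.sum_congr rfl (fun c _ => hterm2 c), Finset.sum_comm]
    have hinner : ∀ d ∈ Icc 1 n,
        (∑ c : Fin m, if n / (s a * d) = s c then (M (s c / s b) : ℚ) else 0)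
          = (M (n / (s a * s b) / d) : ℚ) := by
      intro d hd
      simp only [mem_Icc] at hd
      have hval : n / (s a * d) / s b = n / (s a * s b) / d := by
        rw [Nat.div_div_eq_div_mul, Nat.div_div_eq_div_mul]
        rw [show s a * d * s b = s a * s b * d by ring]
      by_cases hsd : s a * d ≤ n
      · have hsd1 : 1 ≤ s a * d := Nat.mul_pos (hsmem a).1 (by omega)
        have hvS : n / (s a * d) ∈ S := div_memS hS _ hsd1 hsd
        obtain ⟨c₀, hc₀⟩ := hsurj _ hvS
        have hcond : ∀ c : Fin m, (n / (s a * d) = s c) ↔ c = c₀ := by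
          intro c
          constructor
          · intro hh
            exact (hsmono.injective (by rw [← hh, hc₀])).symm
          · intro hh; rw [hh, hc₀]
        have hstep : ∀ c : Fin m,
            (if n / (s a * d) = s c then (M (s c / s b) : ℚ) else 0)
            = (if c = c₀ then (M (s c / s b) : ℚ) else 0) := by
          intro c; rw [if_congr (hcond c) rfl rfl]
        rw [Finset.sum_congr rfl (fun c _ => hstep c),
          Finset.sum_ite_eq' Finset.univ c₀ (fun c => (M (s c / s b) : ℚ)), if_pos (Finset.mem_univ _)]
        rw [hc₀, hval]
      · have hv0 : n / (s a * d) = 0 := Nat.div_eq_of_lt (by omega)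
        have hz : ∀ c : Fin m, ¬(n / (s a * d) = s c) := by
          intro c hc
          have := (hsmem c).1
          omega
        rw [Finset.sum_congr rfl (fun c _ => if_neg (hz c)), Finset.sum_const_zero]
        rw [← hval, hv0, Nat.zero_div, hM0]
        simp
    rw [Finset.sum_congr rfl hinner]
    have hKn : n / (s a * s b) ≤ n := Nat.div_le_self _ _
    have hmert := mertens_main M hM (n / (s a * s b)) n hKn
    have hcast : (∑ d ∈ Icc 1 n, (M (n / (s a * s b) / d) : ℚ))
        = (((if 1 ≤ n / (s a * s b) then 1 else 0 : ℤ)) : ℚ) := by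
      rw [← hmert]
      push_cast
      rfl
    rw [hcast, hT]
    have ha := a.2; have hb := b.2
    have hiff : (1 ≤ n / (s a * s b)) ↔ ((a:ℕ) + 1 + ((b:ℕ) + 1) ≤ m + 1) := by
      rw [Nat.one_le_div_iff (Nat.mul_pos (hsmem a).1 (hsmem b).1)]
      constructor
      · intro h
        have h2 : s b ≤ n / s a := by
          rw [Nat.le_div_iff_mul_le (hsmem a).1, mul_comm]
          exact h
        rw [← hrev] at h2
        have h3 := hsle.mp h2
        rw [Fin.le_def, Fin.val_rev] at h3
        omega
      · intro h
        have h2 : b ≤ Fin.rev a := by rw [Fin.le_def, Fin.val_rev]; omega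
        have h3 : s b ≤ s (Fin.rev a) := hsle.mpr h2
        rw [hrev, Nat.le_div_iff_mul_le (hsmem a).1] at h3
        rw [mul_comm]
        exact h3
    rw [apply_ite (Int.cast : ℤ → ℚ), if_congr hiff rfl rfl]
    norm_num
  -- assembly
  have hTLR : T * (Li * R) = 1 := by
    rw [hTRL]
    calc R * L * (Li * R) = R * ((L * Li) * R) := by rw [mul_assoc, mul_assoc]
    _ = 1 := by rw [hLLi, one_mul, hRR]
  have hLRT : (Li * R) * T = 1 := by
    rw [hTRL]
    calc Li * R * (R * L) = Li * ((R * R) * L) := by rw [mul_assoc, mul_assoc]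
    _ = 1 := by rw [hRR, one_mul, hLiL]
  have hUW : U * ((Li * R) * (Mmat * (Li * R))) = 1 := by
    have hassoc : U * ((Li * R) * (Mmat * (Li * R))) = ((U * Li) * (R * Mmat)) * (Li * R) := by
      simp only [mul_assoc]
    rw [hassoc, hcore, hTLR]
  have hWU := mul_eq_one_comm.mp hUW
  refine ⟨⟨⟨U, (Li * R) * (Mmat * (Li * R)), hUW, hWU⟩, rfl⟩, ?_⟩
  have hUinv : U⁻¹ = (Li * R) * (Mmat * (Li * R)) := Matrix.inv_eq_right_inv hUW
  rw [hUinv]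
  have hassoc2 : T * ((Li * R) * (Mmat * (Li * R))) * T
      = (T * (Li * R)) * (Mmat * ((Li * R) * T)) := by
    simp only [mul_assoc]
  rw [hassoc2, hTLR, one_mul, hLRT, mul_one]
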